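/- arXiv:2211.14284 — 2 statements merged into one kernel-verified Lean document; each statement's English description precedes it below -/
import Mathlib

section
/- Let {V_i}_{i=1}^N be subspaces of a finite-dimensional Hilbert space V (with inner product a) with V = Σ_i V_i, and let P_i : V → V_i be the a-orthogonal projection onto V_i. Suppose every v ∈ V admits a decomposition v = Σ_i v_i with v_i ∈ V_i and Σ_i a(v_i, v_i) ≤ c₁ a(v, v). Then the additive Schwarz operator T = Σ_i P_i satisfies a(Tv, v) ≥ c₁⁻¹ a(v,v) for all v ∈ V; i.e., the smallest eigenvalue of T is at least 1/c₁. -/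
lemma bilin_cs {V : Type*} [AddCommGroup V] [Module ℝ V]
    (a : V →ₗ[ℝ] V →ₗ[ℝ] ℝ)
    (hsym : ∀ u v, a u v = a v u)
    (hnn : ∀ v, 0 ≤ a v v) (x y : V) :
    (a x y) ^ 2 ≤ a x x * a y y := by
  rcases eq_or_lt_of_le (hnn y) with hy | hy
  · have h0 : a x y = 0 := by
      by_contra h
      have key : ∀ t : ℝ, 0 ≤ a x x + 2 * t * a x y := by
        intro t
        have h2 := hnn (x + t • y)
        simp only [map_add, map_smul, LinearMap.add_apply, LinearMap.smul_apply,
          smul_eq_mul] at h2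
        rw [hsym y x, ← hy, mul_zero, add_zero] at h2
        linarith
      have hk := key (-(a x x + 1) / (2 * a x y))
      have ht : 2 * (-(a x x + 1) / (2 * a x y)) * a x y = -(a x x + 1) := by
        field_simp
      rw [ht] at hk
      linarith
    rw [h0]
    simpa using mul_nonneg (hnn x) (hnn y)
  · have key := hnn (x - (a x y / a y y) • y)
    simp only [map_sub, map_smul, LinearMap.sub_apply, LinearMap.smul_apply,
      smul_eq_mul] at key
    have hxy : a y x = a x y := hsym y x
    have hy' : a y y ≠ 0 := ne_of_gt hy
    field_simp at key
    rw [zero_mul, hxy] at key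
    nlinarith

/-- Lions' lemma: the stable decomposition bound implies a lower bound on the additive
Schwarz operator `T = Σ_i P_i`. -/
theorem stmt_15 {V : Type*} [AddCommGroup V] [Module ℝ V] [FiniteDimensional ℝ V]
    (a : V →ₗ[ℝ] V →ₗ[ℝ] ℝ)
    (hsym : ∀ u v, a u v = a v u)
    (hpos : ∀ v, v ≠ 0 → 0 < a v v)
    (N : ℕ) (Vi : Fin N → Submodule ℝ V)
    (hspan : (⨆ i, Vi i) = ⊤)
    (P : Fin N → V →ₗ[ℝ] V)
    (hPmem : ∀ i v, P i v ∈ Vi i)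
    (hPproj : ∀ i v, ∀ w ∈ Vi i, a (P i v) w = a v w)
    (c₁ : ℝ) (hc₁ : 0 < c₁)
    (hstable : ∀ v : V, ∃ vi : Fin N → V,
      (∀ i, vi i ∈ Vi i) ∧ v = ∑ i, vi i ∧
      ∑ i, a (vi i) (vi i) ≤ c₁ * a v v) :
    ∀ v : V, c₁⁻¹ * a v v ≤ a (∑ i, P i v) v := by
  have hnn : ∀ w, 0 ≤ a w w := by
    intro w
    by_cases h : w = 0
    · simp [h]
    · exact (hpos w h).le
  intro v
  by_cases hv : v = 0
  · simp [hv]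
  obtain ⟨vi, hmem, hdecomp, hstab⟩ := hstable v
  -- S = a(Tv, v) = ∑ a(P_i v, P_i v)
  have hS : a (∑ i, P i v) v = ∑ i, a (P i v) (P i v) := by
    rw [map_sum, LinearMap.sum_apply]
    refine Finset.sum_congr rfl fun i _ => ?_
    rw [hsym (P i v) v]
    exact (hPproj i v (P i v) (hPmem i v)).symm
  -- a(v,v) = ∑ a(P_i v, v_i)
  have hx : a v v = ∑ i, a (P i v) (vi i) := by
    conv_lhs => rw [show (a v) v = a v (∑ i, vi i) from by rw [← hdecomp]]
    rw [map_sum]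
    exact Finset.sum_congr rfl fun i _ => (hPproj i v (vi i) (hmem i)).symm
  -- Cauchy–Schwarz over the sum
  have hbound : (a v v) ^ 2 ≤ (∑ i, a (P i v) (P i v)) * ∑ i, a (vi i) (vi i) := by
    have hr : ∀ i : Fin N, a (P i v) (vi i) ≤
        Real.sqrt (a (P i v) (P i v) * a (vi i) (vi i)) := by
      intro i
      calc a (P i v) (vi i) ≤ |a (P i v) (vi i)| := le_abs_self _
        _ = Real.sqrt ((a (P i v) (vi i)) ^ 2) := (Real.sqrt_sq_eq_abs _).symm
        _ ≤ Real.sqrt (a (P i v) (P i v) * a (vi i) (vi i)) :=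
            Real.sqrt_le_sqrt (bilin_cs a hsym hnn _ _)
    have h1 : a v v ≤ ∑ i, Real.sqrt (a (P i v) (P i v) * a (vi i) (vi i)) := by
      rw [hx]; exact Finset.sum_le_sum fun i _ => hr i
    have h2 : (∑ i, Real.sqrt (a (P i v) (P i v) * a (vi i) (vi i))) ^ 2 ≤
        (∑ i, a (P i v) (P i v)) * ∑ i, a (vi i) (vi i) := by
      refine Finset.sum_sq_le_sum_mul_sum_of_sq_eq_mul _
        (fun i _ => hnn _) (fun i _ => hnn _) (fun i _ => ?_)
      exact Real.sq_sqrt (mul_nonneg (hnn _) (hnn _))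
    calc (a v v) ^ 2 ≤ (∑ i, Real.sqrt (a (P i v) (P i v) * a (vi i) (vi i))) ^ 2 :=
          pow_le_pow_left₀ (hnn v) h1 2
      _ ≤ _ := h2
  have hvv : 0 < a v v := hpos v hv
  rw [hS]
  rw [inv_mul_le_iff₀ hc₁]
  nlinarith [hbound, hstab, hvv, Finset.sum_nonneg (fun i (_ : i ∈ Finset.univ) => hnn (P i v))]
end

section
/- Let {V_i}_{i=1}^N be subspaces of a finite-dimensional Hilbert space (V, a) and P_i the a-orthogonal projections. Suppose each subspace overlaps with at most N_O subspaces, i.e., for each i, the set {j : ∃ v_i ∈ V_i, v_j ∈ V_j with a(v_i, v_j) ≠ 0} has at most N_O elements. Then the additive Schwarz operator T = Σ_i P_i satisfies a(Tv, v) ≤ N_O a(v, v) for all v ∈ V. -/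
/-- Upper eigenvalue bound for the additive Schwarz operator by the overlap count. -/
theorem stmt_16 {V : Type*} [AddCommGroup V] [Module ℝ V] [FiniteDimensional ℝ V]
    (a : V →ₗ[ℝ] V →ₗ[ℝ] ℝ)
    (hsym : ∀ u v, a u v = a v u)
    (hpos : ∀ v, v ≠ 0 → 0 < a v v)
    (N : ℕ) (Vi : Fin N → Submodule ℝ V)
    (P : Fin N → V →ₗ[ℝ] V)
    (hPmem : ∀ i v, P i v ∈ Vi i)
    (hPproj : ∀ i v, ∀ w ∈ Vi i, a (P i v) w = a v w)
    (NO : ℕ)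
    (hoverlap : ∀ i,
      ({j | ∃ vi ∈ Vi i, ∃ vj ∈ Vi j, a vi vj ≠ 0} : Set (Fin N)).ncard ≤ NO) :
    ∀ v : V, a (∑ i, P i v) v ≤ (NO : ℝ) * a v v := by
  intro v
  have hnn : ∀ w : V, 0 ≤ a w w := by
    intro w
    rcases eq_or_ne w 0 with h | h
    · simp [h]
    · exact (hpos w h).le
  set u : Fin N → V := fun i => P i v with hu
  set p : Fin N → ℝ := fun i => a (u i) (u i) with hp
  have hpnn : ∀ i, 0 ≤ p i := fun i => hnn _
  have huv : ∀ i, a (u i) v = p i := by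
    intro i
    rw [hsym, hp]
    exact (hPproj i v (u i) (hPmem i v)).symm
  set S : ℝ := ∑ i, p i with hS
  have hSnn : 0 ≤ S := Finset.sum_nonneg fun i _ => hpnn i
  set T : V := ∑ i, u i with hT
  have haTv : a T v = S := by
    rw [hT, map_sum, LinearMap.sum_apply]
    exact Finset.sum_congr rfl fun i _ => huv i
  -- pairwise bound
  have hpair : ∀ x y : V, a x y ≤ (a x x + a y y) / 2 := by
    intro x y
    have h := hnn (x - y)
    have hs := hsym x y
    simp only [map_sub, LinearMap.sub_apply] at h
    linarith
  -- Cauchy-Schwarz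
  have hCS : ∀ x y : V, (a x y) ^ 2 ≤ a x x * a y y := by
    intro x y
    rcases eq_or_ne y 0 with h | h
    · simp [h]
    · have ht : 0 < a y y := hpos y h
      have h0 := hnn ((a y y) • x - (a x y) • y)
      simp only [map_sub, map_smul, LinearMap.sub_apply, LinearMap.smul_apply,
        smul_eq_mul] at h0
      rw [← hsym x y] at h0
      nlinarith [h0, ht, mul_pos ht ht]
  classical
  -- overlap sets
  set J : Fin N → Finset (Fin N) := fun i =>
    (Set.toFinite ({j | ∃ vi ∈ Vi i, ∃ vj ∈ Vi j, a vi vj ≠ 0} : Set (Fin N))).toFinset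
    with hJ
  have hJmem : ∀ i j, j ∈ J i ↔ ∃ vi ∈ Vi i, ∃ vj ∈ Vi j, a vi vj ≠ 0 := by
    intro i j
    simp [hJ, Set.Finite.mem_toFinset]
  have hJcard : ∀ i, (J i).card ≤ NO := by
    intro i
    have := hoverlap i
    rwa [Set.ncard_eq_toFinset_card _ (Set.toFinite _)] at this
  have hJsym : ∀ i j, j ∈ J i ↔ i ∈ J j := by
    intro i j
    rw [hJmem, hJmem]
    constructor
    · rintro ⟨vi, hvi, vj, hvj, hne⟩
      exact ⟨vj, hvj, vi, hvi, by rwa [hsym]⟩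
    · rintro ⟨vj, hvj, vi, hvi, hne⟩
      exact ⟨vi, hvi, vj, hvj, by rwa [hsym]⟩
  have hzero : ∀ i j, j ∉ J i → a (u i) (u j) = 0 := by
    intro i j hij
    by_contra hne
    exact hij ((hJmem i j).2 ⟨u i, hPmem i v, u j, hPmem j v, hne⟩)
  -- bound a T T
  have haTT : a T T ≤ (NO : ℝ) * S := by
    have expand : a T T = ∑ i, ∑ j, a (u i) (u j) := by
      simp only [hT, map_sum, LinearMap.sum_apply]
      exact Finset.sum_comm
    rw [expand]
    have step1 : ∀ i : Fin N, ∑ j, a (u i) (u j) ≤ ∑ j ∈ J i, (p i + p j) / 2 := by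
      intro i
      have hsub : ∑ j, a (u i) (u j) = ∑ j ∈ J i, a (u i) (u j) :=
        (Finset.sum_subset (Finset.subset_univ (J i))
          (fun j _ hj => hzero i j hj)).symm
      rw [hsub]
      exact Finset.sum_le_sum fun j _ => hpair (u i) (u j)
    calc ∑ i, ∑ j, a (u i) (u j)
        ≤ ∑ i, ∑ j ∈ J i, (p i + p j) / 2 := Finset.sum_le_sum fun i _ => step1 i
      _ = (∑ i, ∑ j ∈ J i, p i / 2) + (∑ i, ∑ j ∈ J i, p j / 2) := by
          rw [← Finset.sum_add_distrib]
          exact Finset.sum_congr rfl fun i _ => by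
            rw [← Finset.sum_add_distrib]
            exact Finset.sum_congr rfl fun j _ => by ring
      _ ≤ (NO : ℝ) * S := by
          have h1 : (∑ i, ∑ j ∈ J i, p i / 2) ≤ ∑ i, (NO : ℝ) * (p i / 2) := by
            refine Finset.sum_le_sum fun i _ => ?_
            rw [Finset.sum_const, nsmul_eq_mul]
            exact mul_le_mul_of_nonneg_right
              (by exact_mod_cast hJcard i) (by have := hpnn i; linarith)
          have h2 : (∑ i, ∑ j ∈ J i, p j / 2) ≤ ∑ j, (NO : ℝ) * (p j / 2) := by
            have hswap : (∑ i, ∑ j ∈ J i, p j / 2)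
                = ∑ j, ∑ i ∈ J j, p j / 2 := by
              rw [Finset.sum_sigma', Finset.sum_sigma']
              refine Finset.sum_nbij' (fun x => ⟨x.2, x.1⟩) (fun x => ⟨x.2, x.1⟩)
                ?_ ?_ ?_ ?_ ?_
              · rintro ⟨i, j⟩ h
                simp only [Finset.mem_sigma, Finset.mem_univ, true_and] at h ⊢
                exact (hJsym i j).1 h
              · rintro ⟨j, i⟩ h
                simp only [Finset.mem_sigma, Finset.mem_univ, true_and] at h ⊢
                exact (hJsym j i).1 h
              · rintro ⟨i, j⟩ _; rfl
              · rintro ⟨j, i⟩ _; rfl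
              · rintro ⟨i, j⟩ _; rfl
            rw [hswap]
            refine Finset.sum_le_sum fun j _ => ?_
            rw [Finset.sum_const, nsmul_eq_mul]
            exact mul_le_mul_of_nonneg_right
              (by exact_mod_cast hJcard j) (by have := hpnn j; linarith)
          have : (∑ i, (NO : ℝ) * (p i / 2)) + (∑ j, (NO : ℝ) * (p j / 2))
              = (NO : ℝ) * S := by
            rw [hS, Finset.mul_sum]
            rw [← Finset.sum_add_distrib]
            exact Finset.sum_congr rfl fun i _ => by ring
          linarith
  -- conclude
  have hcs := hCS T v
  rw [haTv] at hcs
  have havv : 0 ≤ a v v := hnn v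
  have key : S ^ 2 ≤ (NO : ℝ) * S * a v v := by
    calc S ^ 2 ≤ a T T * a v v := hcs
      _ ≤ (NO : ℝ) * S * a v v := mul_le_mul_of_nonneg_right haTT havv
  have hgoal : S ≤ (NO : ℝ) * a v v := by
    rcases hSnn.eq_or_lt with h | h
    · rw [← h]; positivity
    · have := (mul_le_mul_iff_of_pos_right h).1 (by nlinarith : S * S ≤ ((NO : ℝ) * a v v) * S)
      exact this
  calc a (∑ i, P i v) v = S := haTv
    _ ≤ (NO : ℝ) * a v v := hgoal
end
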